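/- Let $(a_n)$ be an injective sequence in a semigroup $S$ with no proper sumsequence, and let $A_\infty := \bigcap_{n=1}^{\infty} FS(a_n, a_{n+1}, \dots)$. Then $A_\infty$ is nonempty and is a subsemigroup of $S$ (closed under addition). -/

import Mathlib

/-- The ordered sum `a_{i_1} + ⋯ + a_{i_m}` over a finite index set
`F = {i_1 < ⋯ < i_m}` (junk value `a 0` if `F = ∅`). -/
def ordsum {S : Type*} [AddSemigroup S] (a : ℕ → S) (F : Finset ℕ) : S :=
  match F.sort (· ≤ ·) with
  | [] => a 0
  | i :: l => l.foldl (fun s j => s + a j) (a i)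

/-- `F < G`: every element of `F` is smaller than every element of `G`. -/
def FinsetLT (F G : Finset ℕ) : Prop := ∀ i ∈ F, ∀ j ∈ G, i < j

/-- `FS(a_1, a_2, …)`: the set of all finite ordered sums of the sequence `a`. -/
def FSset {S : Type*} [AddSemigroup S] (a : ℕ → S) : Set S :=
  {s | ∃ F : Finset ℕ, F.Nonempty ∧ ordsum a F = s}

/-- `FS(a_n, a_{n+1}, …)`: finite ordered sums with all indices `≥ n`. -/
def FStail {S : Type*} [AddSemigroup S] (a : ℕ → S) (n : ℕ) : Set S :=
  {s | ∃ F : Finset ℕ, F.Nonempty ∧ (∀ i ∈ F, n ≤ i) ∧ ordsum a F = s}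

/-- A sequence is proper if `a_{F₁} ≠ a_{F₂}` whenever `F₁ < F₂`. -/
def IsProperSeq {S : Type*} [AddSemigroup S] (a : ℕ → S) : Prop :=
  ∀ F G : Finset ℕ, F.Nonempty → G.Nonempty → FinsetLT F G →
    ordsum a F ≠ ordsum a G

/-- `b` is a sumsequence of `a`: `b_k = a_{F_k}` for finite index sets `F₁ < F₂ < ⋯`. -/
def IsSumseq {S : Type*} [AddSemigroup S] (a b : ℕ → S) : Prop :=
  ∃ F : ℕ → Finset ℕ, (∀ k, (F k).Nonempty) ∧
    (∀ k, FinsetLT (F k) (F (k + 1))) ∧ (∀ k, b k = ordsum a (F k))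

/-! ### Auxiliary lemmas -/

/-- Sum of a list of indices. -/
def listsum {S : Type*} [AddSemigroup S] (a : ℕ → S) (l : List ℕ) : S :=
  match l with
  | [] => a 0
  | i :: t => t.foldl (fun s j => s + a j) (a i)

lemma ordsum_eq_listsum {S : Type*} [AddSemigroup S] (a : ℕ → S) (F : Finset ℕ) :
    ordsum a F = listsum a (F.sort (· ≤ ·)) := by
  unfold ordsum listsum
  cases F.sort (· ≤ ·) <;> rfl

lemma foldl_add {S : Type*} [AddSemigroup S] (a : ℕ → S) (l : List ℕ) (x y : S) :
    l.foldl (fun s j => s + a j) (x + y) = x + l.foldl (fun s j => s + a j) y := by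
  induction l generalizing y with
  | nil => rfl
  | cons j t ih =>
    simp only [List.foldl_cons]
    rw [add_assoc, ih]

lemma listsum_append {S : Type*} [AddSemigroup S] (a : ℕ → S) (l₁ l₂ : List ℕ)
    (h₁ : l₁ ≠ []) (h₂ : l₂ ≠ []) :
    listsum a (l₁ ++ l₂) = listsum a l₁ + listsum a l₂ := by
  obtain ⟨i, t, rfl⟩ := List.exists_cons_of_ne_nil h₁
  obtain ⟨j, u, rfl⟩ := List.exists_cons_of_ne_nil h₂
  show (t ++ j :: u).foldl (fun s j => s + a j) (a i) = _
  rw [List.foldl_append]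
  show (u.foldl (fun s j => s + a j) (t.foldl (fun s j => s + a j) (a i) + a j)) = _
  rw [foldl_add]
  rfl

lemma listsum_map {S : Type*} [AddSemigroup S] (a : ℕ → S) (m : ℕ → ℕ) (l : List ℕ)
    (hl : l ≠ []) : listsum a (l.map m) = listsum (fun k => a (m k)) l := by
  cases l with
  | nil => exact absurd rfl hl
  | cons i t =>
    show (t.map m).foldl (fun s j => s + a j) (a (m i)) = _
    rw [List.foldl_map]
    rfl

lemma sort_union {F G : Finset ℕ} (h : FinsetLT F G) :
    (F ∪ G).sort (· ≤ ·) = F.sort (· ≤ ·) ++ G.sort (· ≤ ·) := by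
  have hdisj : Disjoint F G := by
    rw [Finset.disjoint_left]
    intro x hxF hxG
    exact lt_irrefl x (h x hxF x hxG)
  have hperm : List.Perm ((F ∪ G).sort (· ≤ ·)) (F.sort (· ≤ ·) ++ G.sort (· ≤ ·)) := by
    rw [← Multiset.coe_eq_coe]
    rw [show ((F.sort (· ≤ ·) ++ G.sort (· ≤ ·) : List ℕ) : Multiset ℕ)
        = (F.sort (· ≤ ·) : Multiset ℕ) + (G.sort (· ≤ ·) : Multiset ℕ) from rfl]
    rw [Finset.sort_eq, Finset.sort_eq, Finset.sort_eq]
    rw [← Finset.disjUnion_eq_union F G hdisj]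
    rfl
  refine hperm.eq_of_pairwise' (Finset.pairwise_sort _ _) ?_
  rw [List.pairwise_append]
  refine ⟨Finset.pairwise_sort _ _, Finset.pairwise_sort _ _, ?_⟩
  intro x hx y hy
  exact le_of_lt (h x (Finset.mem_sort _ |>.mp hx) y (Finset.mem_sort _ |>.mp hy))

lemma sort_image {m : ℕ → ℕ} (hm : StrictMono m) (F : Finset ℕ) :
    (F.image m).sort (· ≤ ·) = (F.sort (· ≤ ·)).map m := by
  have hperm : List.Perm ((F.image m).sort (· ≤ ·)) ((F.sort (· ≤ ·)).map m) := by
    rw [← Multiset.coe_eq_coe]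
    rw [show (((F.sort (· ≤ ·)).map m : List ℕ) : Multiset ℕ)
        = Multiset.map m (F.sort (· ≤ ·) : Multiset ℕ) from rfl]
    rw [Finset.sort_eq, Finset.sort_eq, Finset.image_val,
      Multiset.dedup_eq_self.mpr (Multiset.Nodup.map hm.injective F.nodup)]
  refine hperm.eq_of_pairwise' (Finset.pairwise_sort _ _) ?_
  exact List.Pairwise.map m (fun x y h => hm.monotone h) (Finset.pairwise_sort _ _)

lemma sort_ne_nil {F : Finset ℕ} (hF : F.Nonempty) : F.sort (· ≤ ·) ≠ [] := by
  obtain ⟨x, hx⟩ := hF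
  intro h
  have := (Finset.mem_sort (α := ℕ) (· ≤ ·)).mpr hx
  rw [h] at this
  exact List.not_mem_nil this

lemma ordsum_union {S : Type*} [AddSemigroup S] (a : ℕ → S) {F G : Finset ℕ}
    (hF : F.Nonempty) (hG : G.Nonempty) (h : FinsetLT F G) :
    ordsum a (F ∪ G) = ordsum a F + ordsum a G := by
  rw [ordsum_eq_listsum, ordsum_eq_listsum, ordsum_eq_listsum, sort_union h]
  exact listsum_append a _ _ (sort_ne_nil hF) (sort_ne_nil hG)

lemma ordsum_image {S : Type*} [AddSemigroup S] (a : ℕ → S) {m : ℕ → ℕ}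
    (hm : StrictMono m) (F : Finset ℕ) (hF : F.Nonempty) :
    ordsum a (F.image m) = ordsum (fun k => a (m k)) F := by
  rw [ordsum_eq_listsum, ordsum_eq_listsum, sort_image hm,
    listsum_map a m _ (sort_ne_nil hF)]

lemma ordsum_singleton {S : Type*} [AddSemigroup S] (a : ℕ → S) (i : ℕ) :
    ordsum a {i} = a i := by
  unfold ordsum
  rw [Finset.sort_singleton]
  rfl

lemma FStail_antitone {S : Type*} [AddSemigroup S] (a : ℕ → S) {n m : ℕ} (h : n ≤ m) :
    FStail a m ⊆ FStail a n := by
  rintro s ⟨F, hF, hFn, rfl⟩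
  exact ⟨F, hF, fun i hi => le_trans h (hFn i hi), rfl⟩

/-- The step function: produces an index larger than everything in `l` and larger than
`nf` applied to the ordered sum over any subset of `l`. -/
noncomputable def stepF {S : Type*} [AddSemigroup S] (a : ℕ → S) (nf : S → ℕ)
    (l : Finset ℕ) : ℕ :=
  (l.powerset.sup fun J => nf (ordsum a J)) + (l.sup id) + 1

/-- The history of chosen indices. -/
noncomputable def histF {S : Type*} [AddSemigroup S] (a : ℕ → S) (nf : S → ℕ) : ℕ → Finset ℕ
  | 0 => ∅
  | (k+1) => insert (stepF a nf (histF a nf k)) (histF a nf k)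

lemma mem_histF_lt {S : Type*} [AddSemigroup S] (a : ℕ → S) (nf : S → ℕ) (k : ℕ)
    {x : ℕ} (hx : x ∈ histF a nf k) : x < stepF a nf (histF a nf k) := by
  have : x ≤ (histF a nf k).sup id := Finset.le_sup (f := id) hx
  unfold stepF
  omega

lemma histF_mono {S : Type*} [AddSemigroup S] (a : ℕ → S) (nf : S → ℕ) :
    Monotone (histF a nf) := by
  apply monotone_nat_of_le_succ
  intro k
  exact Finset.subset_insert _ _

lemma stepF_strictMono {S : Type*} [AddSemigroup S] (a : ℕ → S) (nf : S → ℕ) :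
    StrictMono (fun k => stepF a nf (histF a nf k)) := by
  apply strictMono_nat_of_lt_succ
  intro k
  apply mem_histF_lt
  show _ ∈ insert (stepF a nf (histF a nf k)) (histF a nf k)
  exact Finset.mem_insert_self _ _

lemma histF_eq_image {S : Type*} [AddSemigroup S] (a : ℕ → S) (nf : S → ℕ) (k : ℕ) :
    histF a nf k = (Finset.range k).image (fun k => stepF a nf (histF a nf k)) := by
  induction k with
  | zero => rfl
  | succ k ih =>
    rw [Finset.range_add_one, Finset.image_insert, ← ih]
    rfl

lemma nf_lt_stepF {S : Type*} [AddSemigroup S] (a : ℕ → S) (nf : S → ℕ) {k : ℕ}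
    {J : Finset ℕ} (hJ : J ⊆ histF a nf k) :
    nf (ordsum a J) < stepF a nf (histF a nf k) := by
  have : nf (ordsum a J) ≤ (histF a nf k).powerset.sup fun J => nf (ordsum a J) :=
    Finset.le_sup (f := fun J => nf (ordsum a J)) (Finset.mem_powerset.mpr hJ)
  unfold stepF
  omega

theorem stmt4 {S : Type*} [AddSemigroup S] (a : ℕ → S) (ha : Function.Injective a)
    (hnp : ¬ ∃ b : ℕ → S, IsSumseq a b ∧ IsProperSeq b) :
    (⋂ n : ℕ, FStail a n).Nonempty ∧
      ∀ s₁ ∈ (⋂ n : ℕ, FStail a n), ∀ s₂ ∈ (⋂ n : ℕ, FStail a n),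
        s₁ + s₂ ∈ (⋂ n : ℕ, FStail a n) := by
  constructor
  · -- nonemptiness
    by_contra hne
    rw [Set.not_nonempty_iff_eq_empty] at hne
    have hnf : ∀ s : S, ∃ n : ℕ, s ∉ FStail a n := by
      intro s
      by_contra hc
      push_neg at hc
      have : s ∈ ⋂ n : ℕ, FStail a n := Set.mem_iInter.mpr hc
      rw [hne] at this
      exact this
    choose nf hnfspec using hnf
    set m : ℕ → ℕ := fun k => stepF a nf (histF a nf k) with hm
    have hmmono : StrictMono m := stepF_strictMono a nf
    apply hnp
    refine ⟨fun k => a (m k), ⟨fun k => {m k}, fun k => Finset.singleton_nonempty _,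
      ?_, fun k => (ordsum_singleton a (m k)).symm⟩, ?_⟩
    · intro k
      intro i hi j hj
      rw [Finset.mem_singleton] at hi hj
      subst hi; subst hj
      exact hmmono (Nat.lt_succ_self k)
    · -- properness
      intro I G hI hG hlt
      rw [← ordsum_image a hmmono I hI, ← ordsum_image a hmmono G hG]
      set k := G.min' hG with hk
      have hIk : ∀ i ∈ I, i < k := fun i hi => hlt i hi _ (G.min'_mem hG)
      have hIsub : I.image m ⊆ histF a nf k := by
        rw [histF_eq_image]
        apply Finset.image_subset_image
        intro i hi
        exact Finset.mem_range.mpr (hIk i hi)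
      have h1 : nf (ordsum a (I.image m)) < m k := nf_lt_stepF a nf hIsub
      have h2 : ordsum a (G.image m) ∈ FStail a (m k) := by
        refine ⟨G.image m, hG.image m, ?_, rfl⟩
        intro j hj
        obtain ⟨g, hg, rfl⟩ := Finset.mem_image.mp hj
        exact hmmono.monotone (G.min'_le g hg)
      intro heq
      have h3 : ordsum a (I.image m) ∈ FStail a (m k) := heq ▸ h2
      exact hnfspec _ (FStail_antitone a (le_of_lt h1) h3)
  · -- closure under addition
    intro s₁ hs₁ s₂ hs₂
    rw [Set.mem_iInter]
    intro n
    obtain ⟨H, hH, hHn, rfl⟩ := Set.mem_iInter.mp hs₁ n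
    obtain ⟨H', hH', hH'n, rfl⟩ :=
      Set.mem_iInter.mp hs₂ ((H.max' hH) + 1)
    have hlt : FinsetLT H H' := by
      intro i hi j hj
      have := H.le_max' i hi
      have := hH'n j hj
      omega
    refine ⟨H ∪ H', hH.mono Finset.subset_union_left, ?_, ?_⟩
    · intro i hi
      rcases Finset.mem_union.mp hi with h | h
      · exact hHn i h
      · have h1 := hH'n i h
        have h2 := hHn _ (H.max'_mem hH)
        omega
    · exact ordsum_union a hH hH' hlt
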